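/- Let H₀ be a complex Hilbert space and let γ be a bounded operator on H₀ satisfying Hypothesis (Γ). Let λ ∈ ℝ \ {0}. Then for every closed subspace V ⊆ H₀ with inclusion map ι : V → H₀ (whose adjoint ι* is the orthogonal projection onto V), the bounded operator iλ·I_V + ι*γι on V is bijective with bounded inverse. -/

import Mathlib

open Complex Filter
open scoped InnerProductSpace

/-- The orthogonal projection onto a submodule (junk value `0` if the submodule is not closed). -/
noncomputable def oproj {H : Type*} [NormedAddCommGroup H] [InnerProductSpace ℂ H]
    [CompleteSpace H] (K : Submodule ℂ H) : H →L[ℂ] K := by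
  classical
  exact if h : IsClosed (K : Set H) then
    haveI := h.completeSpace_coe
    K.orthogonalProjectionOnto
  else 0

/-- Hypothesis (Γ): there is a closed subspace `U`, a `c > 0`, and operators `γU` on `U`
(with real part `≥ c`) and `γp` self-adjoint nonnegative on `Uᗮ` such that
`γ(x + y) = γU x + γp y` for `x ∈ U`, `y ∈ Uᗮ`. -/
def HypGamma {H : Type*} [NormedAddCommGroup H] [InnerProductSpace ℂ H] (γ : H →L[ℂ] H) : Prop :=
  ∃ (U : Submodule ℂ H) (c : ℝ) (γU : U →L[ℂ] U) (γp : Uᗮ →L[ℂ] Uᗮ),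
    IsClosed (U : Set H) ∧ 0 < c ∧
    (∀ x : U, c * ‖x‖ ^ 2 ≤ (⟪x, γU x⟫_ℂ).re) ∧
    (∀ y z : Uᗮ, ⟪γp y, z⟫_ℂ = ⟪y, γp z⟫_ℂ) ∧
    (∀ y : Uᗮ, 0 ≤ (⟪y, γp y⟫_ℂ).re) ∧
    (∀ (x : U) (y : Uᗮ), γ ((x : H) + (y : H)) = (γU x : H) + (γp y : H))

lemma aux_arith {c M lam s a reQ imQ : ℝ} (hc : 0 < c) (hM : 0 ≤ M)
    (hs : 0 ≤ s) (ha : 0 ≤ a)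
    (hre : c * a ≤ reQ) (him : |imQ| ≤ M * a) :
    c * |lam| / (c + M) * s ≤ max reQ |lam * s + imQ| := by
  set k := c * |lam| / (c + M) with hk
  have hcM : 0 < c + M := by linarith
  have hkdef : k * (c + M) = c * |lam| := by
    rw [hk]; field_simp
  rcases le_or_gt (k * s) reQ with h | h
  · exact le_max_of_le_left h
  · refine le_max_of_le_right ?_
    have h2 : c * a < k * s := lt_of_le_of_lt hre h
    have h1 : |lam| * s ≤ |lam * s + imQ| + |imQ| := by
      have h3 := abs_add_le (lam * s + imQ) (-imQ)
      simpa [abs_mul, _root_.abs_of_nonneg hs] using h3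
    nlinarith [mul_le_mul_of_nonneg_left h2.le hM, mul_nonneg hM ha,
      mul_le_mul_of_nonneg_left h2.le (mul_nonneg hM hM), abs_nonneg (lam * s + imQ),
      abs_nonneg lam]

lemma aux_div {k s t r : ℝ} (hs : 0 < s) (h1 : k * s ^ 2 ≤ r) (h2 : r ≤ s * t) :
    k * s ≤ t := by nlinarith

lemma aux_zero {k s : ℝ} (hk : 0 < k) (hs : 0 ≤ s) (h : k * s ≤ 0) : s = 0 := by
  nlinarith


/-- If `γ` is bounded on `H₀` and satisfies Hypothesis (Γ), and `λ ∈ ℝ \ {0}`,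
then for every closed subspace `V ⊆ H₀` with inclusion `ι` and orthogonal projection `ι*`,
the operator `iλ·I_V + ι*γι` on `V` is bijective with bounded inverse
(i.e. it has a two-sided bounded inverse). -/
theorem stmt_5
    {H₀ : Type*} [NormedAddCommGroup H₀] [InnerProductSpace ℂ H₀] [CompleteSpace H₀]
    (γ : H₀ →L[ℂ] H₀) (hγ : HypGamma γ)
    (lam : ℝ) (hlam : lam ≠ 0)
    (V : Submodule ℂ H₀) (hV : IsClosed (V : Set H₀)) :
    ∃ S : V →L[ℂ] V,
      ((Complex.I * lam) • ContinuousLinearMap.id ℂ V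
          + (oproj V).comp (γ.comp V.subtypeL)).comp S = ContinuousLinearMap.id ℂ V ∧
      S.comp ((Complex.I * lam) • ContinuousLinearMap.id ℂ V
          + (oproj V).comp (γ.comp V.subtypeL)) = ContinuousLinearMap.id ℂ V := by
  classical
  obtain ⟨U, c, γU, γp, hUc, hc, hγUre, hγpsa, hγpnn, hdec⟩ := hγ
  haveI : CompleteSpace V := hV.completeSpace_coe
  haveI : CompleteSpace U := hUc.completeSpace_coe
  set T : V →L[ℂ] V := (Complex.I * lam) • ContinuousLinearMap.id ℂ V
      + (oproj V).comp (γ.comp V.subtypeL) with hT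
  have hoproj : oproj V = V.orthogonalProjectionOnto := by
    unfold oproj
    rw [dif_pos hV]
  clear_value T
  set M : ℝ := ‖γU‖ with hMdef
  have hM : 0 ≤ M := hMdef ▸ norm_nonneg γU
  set k : ℝ := c * |lam| / (c + M) with hk
  have hk0 : 0 < k := by
    apply div_pos (mul_pos hc (abs_pos.mpr hlam)); linarith
  -- decomposition estimate for the quadratic form of γ
  have hq : ∀ w : H₀, ∃ a : ℝ, 0 ≤ a ∧ c * a ≤ (⟪w, γ w⟫_ℂ).re ∧
      |(⟪w, γ w⟫_ℂ).im| ≤ M * a := by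
    intro w
    set x : U := U.orthogonalProjectionOnto w with hx
    have hymem : w - ↑x ∈ Uᗮ := U.sub_starProjection_mem_orthogonal w
    set y : Uᗮ := ⟨w - ↑x, hymem⟩ with hy
    have hw : w = (x : H₀) + (y : H₀) := by simp [hy]
    have hγw : γ w = (γU x : H₀) + (γp y : H₀) := by
      conv_lhs => rw [hw]
      exact hdec x y
    have hcross1 : ⟪(x : H₀), ((γp y : Uᗮ) : H₀)⟫_ℂ = 0 :=
      Submodule.inner_right_of_mem_orthogonal x.2 (γp y).2
    have hcross2 : ⟪((y : Uᗮ) : H₀), ((γU x : U) : H₀)⟫_ℂ = 0 :=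
      (Submodule.mem_orthogonal' U _).1 y.2 _ (γU x).2
    have hinner : ⟪w, γ w⟫_ℂ = ⟪x, γU x⟫_ℂ + ⟪y, γp y⟫_ℂ := by
      rw [hγw]
      nth_rewrite 1 [hw]
      rw [inner_add_left, inner_add_right, inner_add_right, hcross1, hcross2,
        Submodule.coe_inner, Submodule.coe_inner]
      ring
    have hreal : (⟪y, γp y⟫_ℂ).im = 0 := by
      have h1 : (starRingEnd ℂ) ⟪y, γp y⟫_ℂ = ⟪y, γp y⟫_ℂ := by
        rw [inner_conj_symm]; exact hγpsa y y
      exact Complex.conj_eq_iff_im.mp h1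
    refine ⟨‖x‖ ^ 2, sq_nonneg _, ?_, ?_⟩
    · rw [hinner]
      have := hγUre x
      have := hγpnn y
      simp only [Complex.add_re]
      linarith
    · rw [hinner]
      simp only [Complex.add_im, hreal, add_zero]
      have h1 : |(⟪x, γU x⟫_ℂ).im| ≤ ‖⟪x, γU x⟫_ℂ‖ := Complex.abs_im_le_norm _
      have h2 : ‖⟪x, γU x⟫_ℂ‖ ≤ ‖x‖ * ‖γU x‖ := norm_inner_le_norm _ _
      have h3 : ‖γU x‖ ≤ M * ‖x‖ := hMdef ▸ γU.le_opNorm x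
      calc |(⟪x, γU x⟫_ℂ).im| ≤ ‖⟪x, γU x⟫_ℂ‖ := h1
        _ ≤ ‖x‖ * ‖γU x‖ := h2
        _ ≤ ‖x‖ * (M * ‖x‖) := by
            exact mul_le_mul_of_nonneg_left h3 (norm_nonneg _)
        _ = M * ‖x‖ ^ 2 := by ring
  -- the numerical range estimate for T
  have hTin : ∀ v : V, k * ‖v‖ ^ 2 ≤ ‖⟪v, T v⟫_ℂ‖ := by
    intro v
    have hTv : T v = (Complex.I * lam) • v + V.orthogonalProjectionOnto (γ ↑v) := by
      rw [hT]; simp [hoproj]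
    have hz : ⟪v, T v⟫_ℂ = Complex.I * lam * ((‖v‖ ^ 2 : ℝ) : ℂ) + ⟪(v : H₀), γ ↑v⟫_ℂ := by
      rw [hTv, inner_add_right, inner_smul_right, inner_self_eq_norm_sq_to_K,
        Submodule.inner_orthogonalProjectionOnto_eq_of_mem_left]
      push_cast
      ring_nf
      congr 1
    obtain ⟨a, ha, hre, him⟩ := hq (v : H₀)
    set q := ⟪(v : H₀), γ ↑v⟫_ℂ with hqdef
    have hzI : ⟪v, T v⟫_ℂ = ((lam * ‖v‖ ^ 2 : ℝ) : ℂ) * Complex.I + q := by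
      rw [hz]; push_cast; ring
    have hzre : (⟪v, T v⟫_ℂ).re = q.re := by
      rw [hzI]
      simp only [Complex.add_re, Complex.mul_I_re, Complex.ofReal_im, neg_zero, zero_add]
    have hzim : (⟪v, T v⟫_ℂ).im = lam * ‖v‖ ^ 2 + q.im := by
      rw [hzI]
      simp only [Complex.add_im, Complex.mul_I_im, Complex.ofReal_re]
    have key := aux_arith (lam := lam) hc hM (s := ‖v‖ ^ 2) (sq_nonneg _) ha hre him
    rcases max_cases q.re |lam * ‖v‖ ^ 2 + q.im| with ⟨heq, _⟩ | ⟨heq, _⟩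
    · rw [heq] at key
      calc k * ‖v‖ ^ 2 ≤ q.re := key
        _ ≤ |(⟪v, T v⟫_ℂ).re| := by rw [hzre]; exact le_abs_self _
        _ ≤ ‖⟪v, T v⟫_ℂ‖ := Complex.abs_re_le_norm _
    · rw [heq] at key
      calc k * ‖v‖ ^ 2 ≤ |lam * ‖v‖ ^ 2 + q.im| := key
        _ = |(⟪v, T v⟫_ℂ).im| := by rw [hzim]
        _ ≤ ‖⟪v, T v⟫_ℂ‖ := Complex.abs_im_le_norm _
  -- lower bound for T
  have hTlow : ∀ v : V, k * ‖v‖ ≤ ‖T v‖ := by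
    intro v
    rcases eq_or_ne v 0 with rfl | hv
    · simp
    · have h1 := hTin v
      have h2 : ‖⟪v, T v⟫_ℂ‖ ≤ ‖v‖ * ‖T v‖ := norm_inner_le_norm _ _
      have h3 : 0 < ‖v‖ := norm_pos_iff.mpr hv
      exact aux_div h3 h1 h2
  -- lower bound for the adjoint
  set A := ContinuousLinearMap.adjoint T with hA
  have hTA : ∀ (x u : V), ⟪x, A u⟫_ℂ = ⟪T x, u⟫_ℂ := fun x u => by
    rw [hA]; exact ContinuousLinearMap.adjoint_inner_right T x u
  clear_value A
  have hTadj : ∀ u : V, k * ‖u‖ ≤ ‖A u‖ := by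
    intro u
    have h0 : ‖⟪u, A u⟫_ℂ‖ = ‖⟪u, T u⟫_ℂ‖ := by
      rw [hTA, ← inner_conj_symm]
      exact RCLike.norm_conj _
    rcases eq_or_ne u 0 with rfl | hu
    · simp
    · have h1 := hTin u
      rw [← h0] at h1
      have h2 : ‖⟪u, A u⟫_ℂ‖ ≤ ‖u‖ * ‖A u‖ := norm_inner_le_norm _ _
      have h3 : 0 < ‖u‖ := norm_pos_iff.mpr hu
      exact aux_div h3 h1 h2
  -- injectivity
  have hker : T.ker = ⊥ := by
    rw [Submodule.eq_bot_iff]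
    intro v hv
    have hv0 : T v = 0 := hv
    have h5 := hTlow v
    rw [hv0, norm_zero] at h5
    exact norm_eq_zero.mp (aux_zero hk0 (norm_nonneg v) h5)
  -- closed range
  have hanti : AntilipschitzWith ⟨k⁻¹, by positivity⟩ T := by
    apply T.antilipschitz_of_bound
    intro x
    have h1 := hTlow x
    have h2 := mul_le_mul_of_nonneg_left h1 (le_of_lt (inv_pos.mpr hk0))
    calc ‖x‖ = k⁻¹ * (k * ‖x‖) := by field_simp
      _ ≤ k⁻¹ * ‖T x‖ := h2
  have hclosed : IsClosed ((T.range : Submodule ℂ V) : Set V) := by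
    have h := hanti.isClosed_range T.uniformContinuous
    rwa [LinearMap.coe_range]
  haveI : CompleteSpace (T.range : Submodule ℂ V) := hclosed.completeSpace_coe
  -- surjectivity
  have hrange : T.range = ⊤ := by
    rw [← Submodule.orthogonal_eq_bot_iff, Submodule.eq_bot_iff]
    intro u hu
    have h1 : ∀ v : V, ⟪T v, u⟫_ℂ = 0 := fun v =>
      (Submodule.mem_orthogonal _ u).1 hu _ ⟨v, rfl⟩
    have h2 : A u = 0 := by
      have h3 : ⟪A u, A u⟫_ℂ = 0 := by
        rw [hTA]
        exact h1 _
      exact inner_self_eq_zero.mp h3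
    have h4 := hTadj u
    rw [h2, norm_zero] at h4
    exact norm_eq_zero.mp (aux_zero hk0 (norm_nonneg u) h4)
  set e := ContinuousLinearEquiv.ofBijective T hker hrange with he
  have hecoe : ∀ x : V, e x = T x := fun x =>
    congrFun (ContinuousLinearEquiv.coeFn_ofBijective T hker hrange) x
  refine ⟨e.symm.toContinuousLinearMap, ?_, ?_⟩
  · apply ContinuousLinearMap.ext
    intro v
    have h6 : T (e.symm v) = v := by
      rw [← hecoe]
      exact e.apply_symm_apply v
    simpa using h6
  · apply ContinuousLinearMap.ext
    intro v
    have h6 : e.symm (T v) = v := by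
      rw [← hecoe]
      exact e.symm_apply_apply v
    simpa using h6
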